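/- Let G = C_m ⋊_{(r)} C_{4n} be the metacyclic group with presentation ⟨u, v | u^m = v^{4n} = 1, v u v^{-1} = u^r⟩ where m is odd, gcd(m, 4n) = 1 and r^{4n} ≡ 1 (mod m). Then G admits a surjective homomorphism onto the quaternion group Q_{4a} (a > 1 odd) if and only if a divides m and r ≡ -1 (mod a). -/

import Mathlib

private lemma aux_a_inv {k : ℕ} (i : ZMod (2*k)) :
    (QuaternionGroup.a i : QuaternionGroup k)⁻¹ = QuaternionGroup.a (-i) :=
  inv_eq_of_mul_eq_one_right (by rw [QuaternionGroup.a_mul_a, add_neg_cancel]; rfl)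

private lemma aux_a_pow {k : ℕ} [NeZero k] (i : ZMod (2*k)) (s : ℕ) :
    (QuaternionGroup.a i : QuaternionGroup k) ^ s = QuaternionGroup.a ((s : ZMod (2*k)) * i) := by
  haveI : NeZero (2*k) := ⟨Nat.mul_ne_zero two_ne_zero (NeZero.ne k)⟩
  conv_lhs => rw [← ZMod.natCast_zmod_val i, ← QuaternionGroup.a_one_pow, ← pow_mul,
    QuaternionGroup.a_one_pow]
  congr 1
  rw [Nat.cast_mul, ZMod.natCast_zmod_val]
  exact mul_comm _ _

private lemma aux_conj_pow {H : Type*} [Group H] {x y : H} {r : ℕ}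
    (h : y * x * y⁻¹ = x ^ r) (t k : ℕ) : y ^ t * x ^ k = x ^ (k * r ^ t) * y ^ t := by
  have base : ∀ K : ℕ, y * x ^ K = x ^ (K * r) * y := by
    intro K
    have h2 : y * x ^ K * y⁻¹ = x ^ (K * r) := by
      rw [← conj_pow, h, ← pow_mul, mul_comm r K]
    have h3 := congrArg (· * y) h2
    simpa [inv_mul_cancel_right] using h3
  induction t generalizing k with
  | zero => simp
  | succ t ih =>
    have he : k * r ^ (t+1) = k * r * r ^ t := by rw [pow_succ]; ring
    calc y ^ (t+1) * x ^ k = y ^ t * (y * x ^ k) := by rw [pow_succ, mul_assoc]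
      _ = y ^ t * (x ^ (k*r) * y) := by rw [base]
      _ = (y ^ t * x ^ (k*r)) * y := by rw [mul_assoc]
      _ = (x ^ (k*r*r^t) * y ^ t) * y := by rw [ih]
      _ = x ^ (k * r ^ (t+1)) * y ^ (t+1) := by rw [he, mul_assoc, ← pow_succ]

/-- Let `G = C_m ⋊_{(r)} C_{4n}` (presented by generators `u, v` with
`u^m = v^{4n} = 1`, `v u v⁻¹ = u^r`, of order `4nm`).  Then `G` surjects onto the
generalised quaternion group `Q_{4a}` (for `a > 1` odd) iff `a ∣ m` and
`r ≡ -1 (mod a)`. -/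
theorem stmt2 (G : Type*) [Group G] (m n r : ℕ) (hn : 1 ≤ n)
    (hm : Odd m) (hcop : Nat.Coprime m (4 * n)) (hr : r ^ (4 * n) ≡ 1 [MOD m])
    (u v : G) (hu : orderOf u = m) (hv : orderOf v = 4 * n)
    (hrel : v * u * v⁻¹ = u ^ r)
    (hgen : Subgroup.closure {u, v} = ⊤)
    (hcard : Nat.card G = m * (4 * n))
    (a : ℕ) (ha : 1 < a) (hao : Odd a) :
    (∃ f : G →* QuaternionGroup a, Function.Surjective f) ↔
      (a ∣ m ∧ (r : ZMod a) = -1) := by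
  haveI : NeZero a := ⟨by omega⟩
  haveI : NeZero (2*a) := ⟨by omega⟩
  have hm1 : 1 ≤ m := hm.pos
  have hu1 : u ^ m = 1 := hu ▸ pow_orderOf_eq_one u
  have hv1 : v ^ (4*n) = 1 := hv ▸ pow_orderOf_eq_one v
  -- decomposition lemma
  have dec : ∀ g : G, ∃ s t : ℕ, g = u ^ s * v ^ t := by
    intro g
    have hg : g ∈ Subgroup.closure {u, v} := hgen ▸ Subgroup.mem_top g
    induction hg using Subgroup.closure_induction with
    | mem x hx =>
      simp only [Set.mem_insert_iff, Set.mem_singleton_iff] at hx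
      rcases hx with rfl | rfl
      · exact ⟨1, 0, by simp⟩
      · exact ⟨0, 1, by simp⟩
    | one => exact ⟨0, 0, by simp⟩
    | mul x y hx hy px py =>
      obtain ⟨s, t, rfl⟩ := px
      obtain ⟨s', t', rfl⟩ := py
      refine ⟨s + s' * r ^ t, t + t', ?_⟩
      calc u ^ s * v ^ t * (u ^ s' * v ^ t')
          = u ^ s * (v ^ t * u ^ s') * v ^ t' := by group
        _ = u ^ s * (u ^ (s' * r ^ t) * v ^ t) * v ^ t' := by rw [aux_conj_pow hrel]
        _ = u ^ (s + s' * r ^ t) * v ^ (t + t') := by rw [pow_add, pow_add]; group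
    | inv x hx px =>
      obtain ⟨s, t, rfl⟩ := px
      have hui : (u ^ s)⁻¹ = u ^ (s * (m - 1)) := by
        refine inv_eq_of_mul_eq_one_right ?_
        rw [← pow_add]
        have hm' : m - 1 + 1 = m := by omega
        have he : s + s * (m-1) = m * s := by
          calc s + s * (m-1) = s * ((m-1) + 1) := by ring
            _ = m * s := by rw [hm', mul_comm]
        rw [he, pow_mul, hu1, one_pow]
      have hvi : (v ^ t)⁻¹ = v ^ (t * (4*n - 1)) := by
        refine inv_eq_of_mul_eq_one_right ?_
        rw [← pow_add]
        have hn' : 4*n - 1 + 1 = 4*n := by omega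
        have he : t + t * (4*n-1) = (4*n) * t := by
          calc t + t * (4*n-1) = t * ((4*n-1) + 1) := by ring
            _ = (4*n) * t := by rw [hn', mul_comm]
        rw [he, pow_mul, hv1, one_pow]
      refine ⟨(s * (m-1)) * r ^ (t * (4*n-1)), t * (4*n-1), ?_⟩
      rw [mul_inv_rev, hui, hvi, aux_conj_pow hrel]
  constructor
  · -- forward direction
    rintro ⟨f, hf⟩
    have hgen' : Subgroup.closure {f u, f v} = (⊤ : Subgroup (QuaternionGroup a)) := by
      have h1 : Subgroup.map f (Subgroup.closure {u, v}) = Subgroup.closure {f u, f v} := by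
        rw [MonoidHom.map_closure]; congr 1; rw [Set.image_pair]
      rw [← h1, hgen, ← MonoidHom.range_eq_map, MonoidHom.range_eq_top]
      exact hf
    have hdu : orderOf (f u) ∣ m := hu ▸ orderOf_map_dvd f u
    obtain ⟨i, hA⟩ : ∃ i, f u = QuaternionGroup.a i := by
      cases hA : f u with
      | a i => exact ⟨i, rfl⟩
      | xa i =>
        rw [hA, QuaternionGroup.orderOf_xa] at hdu
        exact absurd hdu (by rcases hm with ⟨c, rfl⟩; omega)
    obtain ⟨j, hB⟩ : ∃ j, f v = QuaternionGroup.xa j := by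
      cases hB : f v with
      | xa j => exact ⟨j, rfl⟩
      | a j =>
        exfalso
        have hsub : Subgroup.closure {f u, f v} ≤ Subgroup.zpowers (QuaternionGroup.a 1) := by
          refine (Subgroup.closure_le _).mpr ?_
          intro x hx
          simp only [Set.mem_insert_iff, Set.mem_singleton_iff] at hx
          rcases hx with rfl | rfl <;> rw [SetLike.mem_coe, ← mem_powers_iff_mem_zpowers]
          · exact ⟨i.val, by
              show QuaternionGroup.a 1 ^ i.val = f u
              rw [QuaternionGroup.a_one_pow, ZMod.natCast_zmod_val, hA]⟩
          · exact ⟨j.val, by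
              show QuaternionGroup.a 1 ^ j.val = f v
              rw [QuaternionGroup.a_one_pow, ZMod.natCast_zmod_val, hB]⟩
        rw [hgen'] at hsub
        have hmem := hsub (Subgroup.mem_top (QuaternionGroup.xa 0))
        rw [← mem_powers_iff_mem_zpowers] at hmem
        obtain ⟨z, hz⟩ := hmem
        simp only [QuaternionGroup.a_one_pow] at hz
        cases hz
    -- conjugation relation pushed to Q
    have hZ : (r : ZMod (2*a)) * i + i = 0 := by
      have h1 := congrArg f hrel
      simp only [map_mul, map_inv, map_pow] at h1
      rw [hA, hB, aux_a_pow] at h1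
      have h2 : QuaternionGroup.xa j * QuaternionGroup.a i
          = QuaternionGroup.a (-i) * QuaternionGroup.xa j := by
        rw [QuaternionGroup.xa_mul_a, QuaternionGroup.a_mul_xa, sub_neg_eq_add]
      rw [h2, mul_inv_cancel_right, QuaternionGroup.a.injEq] at h1
      linear_combination -h1
    -- some element maps to `a 1`
    obtain ⟨g, hg⟩ := hf (QuaternionGroup.a 1)
    obtain ⟨s, t, rfl⟩ := dec g
    rw [map_mul, map_pow, map_pow, hA, hB, aux_a_pow] at hg
    obtain ⟨q, rfl⟩ : ∃ q, t = 2 * q := by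
      rcases Nat.even_or_odd t with ⟨q, hq⟩ | ⟨q, hq⟩
      · exact ⟨q, by omega⟩
      · exfalso
        rw [hq, pow_add, pow_mul, QuaternionGroup.xa_sq, pow_one, aux_a_pow,
          QuaternionGroup.a_mul_xa, QuaternionGroup.a_mul_xa] at hg
        cases hg
    rw [pow_mul, QuaternionGroup.xa_sq, aux_a_pow, QuaternionGroup.a_mul_a,
      QuaternionGroup.a.injEq] at hg
    -- push to `ZMod a`
    have hdvd2 : a ∣ 2 * a := ⟨2, by ring⟩
    have e1 : (s : ZMod a) * (ZMod.castHom hdvd2 (ZMod a) i) = 1 := by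
      have h3 := congrArg (ZMod.castHom hdvd2 (ZMod a)) hg
      simpa [map_add, map_mul, map_one, ZMod.natCast_self] using h3
    have e2 : (r : ZMod a) * (ZMod.castHom hdvd2 (ZMod a) i)
        + (ZMod.castHom hdvd2 (ZMod a) i) = 0 := by
      have h3 := congrArg (ZMod.castHom hdvd2 (ZMod a)) hZ
      simpa [map_add, map_mul] using h3
    constructor
    · -- a ∣ m
      have ha1 : (QuaternionGroup.a 1 : QuaternionGroup a)
          = (QuaternionGroup.a i) ^ s * (QuaternionGroup.a (a : ZMod (2*a))) ^ q := by
        rw [aux_a_pow, aux_a_pow, QuaternionGroup.a_mul_a, hg]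
      have hcomm : Commute ((QuaternionGroup.a i : QuaternionGroup a) ^ s)
          ((QuaternionGroup.a (a : ZMod (2*a)) : QuaternionGroup a) ^ q) := by
        apply Commute.pow_pow
        show _ = _
        rw [QuaternionGroup.a_mul_a, QuaternionGroup.a_mul_a, add_comm]
      have hC2 : (QuaternionGroup.a (a : ZMod (2*a)) : QuaternionGroup a) ^ 2 = 1 := by
        rw [aux_a_pow,
          show ((2:ℕ) : ZMod (2*a)) * (a : ZMod (2*a)) = ((2*a : ℕ) : ZMod (2*a)) by push_cast; ring,
          ZMod.natCast_self]
        rfl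
      have hlcm : 2 * a ∣ orderOf (f u) * 2 := by
        have h1 : orderOf (QuaternionGroup.a 1 : QuaternionGroup a) = 2 * a :=
          QuaternionGroup.orderOf_a_one
        have h2 := hcomm.orderOf_mul_dvd_lcm
        rw [← ha1, h1] at h2
        refine dvd_trans h2 (Nat.lcm_dvd ?_ ?_)
        · exact dvd_trans (dvd_trans (orderOf_pow_dvd s) (by rw [hA])) ⟨2, rfl⟩
        · exact dvd_trans (dvd_trans (orderOf_pow_dvd q)
            (orderOf_dvd_of_pow_eq_one hC2)) ⟨orderOf (f u), by ring⟩
      have hadu : a ∣ orderOf (f u) := by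
        obtain ⟨c, hc⟩ := hlcm
        refine ⟨c, Nat.eq_of_mul_eq_mul_right (show 0 < 2 by norm_num) ?_⟩
        rw [hc]; ring
      exact dvd_trans hadu hdu
    · -- r ≡ -1 (mod a)
      have h4 : ((r : ZMod a) + 1) * ((s : ZMod a) * (ZMod.castHom hdvd2 (ZMod a) i)) = 0 := by
        calc ((r : ZMod a) + 1) * ((s : ZMod a) * (ZMod.castHom hdvd2 (ZMod a) i))
            = (s : ZMod a) * ((r : ZMod a) * (ZMod.castHom hdvd2 (ZMod a) i)
              + (ZMod.castHom hdvd2 (ZMod a) i)) := by ring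
          _ = 0 := by rw [e2, mul_zero]
      rw [e1, mul_one] at h4
      linear_combination h4
  · -- backward direction
    rintro ⟨hdvd, hra⟩
    have hra' : (2 * a) ∣ 2 * (r + 1) := by
      have h0 : (((r + 1 : ℕ)) : ZMod a) = 0 := by push_cast [hra]; ring
      obtain ⟨c, hc⟩ := (ZMod.natCast_eq_zero_iff _ _).mp h0
      exact ⟨c, by rw [hc]; ring⟩
    set A : QuaternionGroup a := QuaternionGroup.a 2 with hAdef
    set B : QuaternionGroup a := QuaternionGroup.xa 0 with hBdef
    have hAm : A ^ m = 1 := by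
      rw [hAdef, aux_a_pow,
        show (m : ZMod (2*a)) * 2 = ((m*2 : ℕ) : ZMod (2*a)) by push_cast; ring,
        (ZMod.natCast_eq_zero_iff _ _).mpr
          (by obtain ⟨c, rfl⟩ := hdvd; exact ⟨c, by ring⟩ : (2*a) ∣ m*2)]
      rfl
    have hB4n : B ^ (4*n) = 1 := by
      rw [hBdef, pow_mul, QuaternionGroup.xa_pow_four, one_pow]
    have hBA : B * A * B⁻¹ = A ^ r := by
      have h2 : B * A = A ^ r * B := by
        rw [hAdef, hBdef, aux_a_pow, QuaternionGroup.xa_mul_a, QuaternionGroup.a_mul_xa]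
        congr 1
        have hz : ((2*(r+1) : ℕ) : ZMod (2*a)) = 0 :=
          (ZMod.natCast_eq_zero_iff _ _).mpr hra'
        push_cast at hz
        linear_combination hz
      rw [h2, mul_inv_cancel_right]
    have hordA : orderOf A ∣ m := orderOf_dvd_of_pow_eq_one hAm
    have hordB : orderOf B ∣ 4*n := orderOf_dvd_of_pow_eq_one hB4n
    -- well-definedness
    have wd : ∀ s t s' t' : ℕ, u ^ s * v ^ t = u ^ s' * v ^ t' →
        A ^ s * B ^ t = A ^ s' * B ^ t' := by
      intro s t s' t' heq
      have hvt : ∀ T : ℕ, (v ^ T) ^ (4*n) = 1 := fun T => by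
        rw [← pow_mul, mul_comm, pow_mul, hv1, one_pow]
      have hut : ∀ S : ℕ, (u ^ S) ^ m = 1 := fun S => by
        rw [← pow_mul, mul_comm, pow_mul, hu1, one_pow]
      have h1 : v ^ t = (u ^ s)⁻¹ * (u ^ s' * v ^ t') := by rw [← heq, inv_mul_cancel_left]
      have h2 : v ^ t * (v ^ t')⁻¹ = (u ^ s)⁻¹ * u ^ s' := by rw [h1]; group
      have hw4n : (v ^ t * (v ^ t')⁻¹) ^ (4*n) = 1 := by
        rw [(Commute.pow_pow_self v t t').inv_right.mul_pow, hvt, inv_pow, hvt, inv_one, one_mul]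
      have hwm : (v ^ t * (v ^ t')⁻¹) ^ m = 1 := by
        rw [h2, (Commute.pow_pow_self u s s').inv_left.mul_pow, inv_pow, hut, hut, inv_one, one_mul]
      have hw1 : v ^ t * (v ^ t')⁻¹ = 1 := by
        have hd := Nat.dvd_gcd (orderOf_dvd_of_pow_eq_one hwm) (orderOf_dvd_of_pow_eq_one hw4n)
        rw [hcop] at hd
        exact orderOf_eq_one_iff.mp (Nat.dvd_one.mp hd)
      have hvv : v ^ t = v ^ t' := by rwa [mul_inv_eq_one] at hw1
      have huu : u ^ s = u ^ s' := by
        rw [h2] at hw1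
        exact inv_mul_eq_one.mp hw1
      have hst : s ≡ s' [MOD m] := hu ▸ pow_eq_pow_iff_modEq.mp huu
      have htt : t ≡ t' [MOD 4*n] := hv ▸ pow_eq_pow_iff_modEq.mp hvv
      rw [pow_eq_pow_iff_modEq.mpr (Nat.ModEq.of_dvd hordA hst),
        pow_eq_pow_iff_modEq.mpr (Nat.ModEq.of_dvd hordB htt)]
    choose S T hST using dec
    have feq : ∀ (g : G) (s t : ℕ), g = u ^ s * v ^ t → A ^ S g * B ^ T g = A ^ s * B ^ t :=
      fun g s t h => wd _ _ _ _ ((hST g).symm.trans h)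
    have hmul : ∀ g h : G, A ^ S (g*h) * B ^ T (g*h) = (A ^ S g * B ^ T g) * (A ^ S h * B ^ T h) := by
      intro g h
      have hgh : g * h = u ^ (S g + S h * r ^ T g) * v ^ (T g + T h) := by
        conv_lhs => rw [hST g, hST h]
        calc u ^ S g * v ^ T g * (u ^ S h * v ^ T h)
            = u ^ S g * (v ^ T g * u ^ S h) * v ^ T h := by group
          _ = u ^ S g * (u ^ (S h * r ^ T g) * v ^ T g) * v ^ T h := by rw [aux_conj_pow hrel]
          _ = u ^ (S g + S h * r ^ T g) * v ^ (T g + T h) := by rw [pow_add, pow_add]; group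
      rw [feq _ _ _ hgh, pow_add, pow_add]
      calc A ^ S g * A ^ (S h * r ^ T g) * (B ^ T g * B ^ T h)
          = A ^ S g * (A ^ (S h * r ^ T g) * B ^ T g) * B ^ T h := by group
        _ = A ^ S g * (B ^ T g * A ^ S h) * B ^ T h := by rw [aux_conj_pow hBA]
        _ = (A ^ S g * B ^ T g) * (A ^ S h * B ^ T h) := by group
    refine ⟨MonoidHom.mk' (fun g => A ^ S g * B ^ T g) hmul, ?_⟩
    set F : G →* QuaternionGroup a := MonoidHom.mk' (fun g => A ^ S g * B ^ T g) hmul with hFdef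
    have hA' : A ∈ F.range := ⟨u, by
      show A ^ S u * B ^ T u = A
      rw [feq u 1 0 (by simp), pow_one, pow_zero, mul_one]⟩
    have hB' : B ∈ F.range := ⟨v, by
      show A ^ S v * B ^ T v = B
      rw [feq v 0 1 (by simp), pow_zero, pow_one, one_mul]⟩
    have ha1 : (QuaternionGroup.a 1 : QuaternionGroup a) ∈ F.range := by
      have key : A ^ ((a+1)/2) = QuaternionGroup.a 1 * B ^ 2 := by
        rw [hAdef, hBdef, aux_a_pow, QuaternionGroup.xa_sq, QuaternionGroup.a_mul_a]
        congr 1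
        have h2 : ((a+1)/2 : ℕ) * 2 = a + 1 := by
          obtain ⟨c, rfl⟩ := hao; omega
        calc (((a+1)/2 : ℕ) : ZMod (2*a)) * 2 = (((a+1)/2 * 2 : ℕ) : ZMod (2*a)) := by
              push_cast; ring
          _ = ((a + 1 : ℕ) : ZMod (2*a)) := by rw [h2]
          _ = 1 + (a : ZMod (2*a)) := by push_cast; ring
      have h3 : (QuaternionGroup.a 1 : QuaternionGroup a) = A ^ ((a+1)/2) * (B ^ 2)⁻¹ := by
        rw [key, mul_inv_cancel_right]
      rw [h3]
      exact mul_mem (pow_mem hA' _) (inv_mem (pow_mem hB' _))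
    intro x
    have hx : x ∈ F.range := by
      cases x with
      | a z =>
        have h4 : QuaternionGroup.a z = (QuaternionGroup.a 1 : QuaternionGroup a) ^ z.val := by
          rw [QuaternionGroup.a_one_pow, ZMod.natCast_zmod_val]
        rw [h4]; exact pow_mem ha1 _
      | xa z =>
        have h4 : QuaternionGroup.xa z = B * (QuaternionGroup.a 1 : QuaternionGroup a) ^ z.val := by
          rw [QuaternionGroup.a_one_pow, ZMod.natCast_zmod_val, hBdef, QuaternionGroup.xa_mul_a,
            zero_add]
        rw [h4]; exact mul_mem hB' (pow_mem ha1 _)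
    exact hx
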